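/- arXiv:1011.0541 — 2 statements merged into one kernel-verified Lean document; each statement's English description precedes it below -/
import Mathlib

section
/- Let T > 0 and a, b, c > 0. Let X and Y be identically distributed real-valued random variables on a probability space with E[X⁴] ≤ b·T² and E[(X − Y)²] ≥ a·T. Then E[|X − Y|] ≥ (1/(2c))·(a − 2^{5/2}·b^{3/4}/c)·T^{1/2}. -/
open MeasureTheory ProbabilityTheory ENNReal

private lemma aux_mem4 {Ω : Type*} [MeasureSpace Ω] {X : Ω → ℝ}
    (hm : AEStronglyMeasurable X ℙ) (h4 : Integrable (fun ω => X ω ^ 4) ℙ) :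
    MemLp X 4 ℙ := by
  refine (memLp_norm_rpow_iff (q := 4) hm (by norm_num) (by norm_num)).1 ?_
  have h44 : (4 : ℝ≥0∞) / 4 = 1 := by
    rw [ENNReal.div_self] <;> norm_num
  rw [h44, memLp_one_iff_integrable]
  refine h4.congr (Filter.Eventually.of_forall fun ω => ?_)
  show X ω ^ 4 = ‖X ω‖ ^ (4 : ℝ≥0∞).toReal
  rw [show ((4 : ℝ≥0∞)).toReal = ((4 : ℕ) : ℝ) by norm_num, Real.rpow_natCast,
    Real.norm_eq_abs, ← abs_pow]
  exact (abs_of_nonneg (by positivity)).symm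

private lemma aux_int_pow {Ω : Type*} [MeasureSpace Ω] {f : Ω → ℝ} (n : ℕ) (hn : n ≠ 0)
    (h : MemLp f n ℙ) : Integrable (fun ω => |f ω| ^ n) ℙ := by
  have h' := h.integrable_norm_rpow (by exact_mod_cast (Nat.cast_ne_zero (R := ℝ≥0∞)).2 hn)
    (by simp)
  refine h'.congr (Filter.Eventually.of_forall fun ω => ?_)
  show ‖f ω‖ ^ ((n : ℝ≥0∞)).toReal = |f ω| ^ n
  rw [ENNReal.toReal_natCast, Real.rpow_natCast, Real.norm_eq_abs]

set_option maxHeartbeats 1000000 in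
/-- For `T > 0`, `a, b, c > 0` and identically distributed `X, Y` with `E[X⁴] ≤ b·T²`
and `E[(X − Y)²] ≥ a·T`, one has `E[|X − Y|] ≥ (1/(2c))·(a − 2^{5/2}·b^{3/4}/c)·T^{1/2}`. -/
theorem stmt_6 {Ω : Type*} [MeasureSpace Ω] [IsProbabilityMeasure (ℙ : Measure Ω)]
    (T a b c : ℝ) (hT : 0 < T) (ha : 0 < a) (hb : 0 < b) (hc : 0 < c)
    (X Y : Ω → ℝ) (hid : IdentDistrib X Y ℙ ℙ)
    (h4 : Integrable fun ω => X ω ^ 4)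
    (hX4 : ∫ ω, X ω ^ 4 ≤ b * T ^ 2)
    (h2 : a * T ≤ ∫ ω, (X ω - Y ω) ^ 2) :
    (1 / (2 * c)) * (a - 2 ^ (5 / 2 : ℝ) * b ^ (3 / 4 : ℝ) / c) * T ^ (1 / 2 : ℝ)
      ≤ ∫ ω, |X ω - Y ω| := by
  set Z : Ω → ℝ := fun ω => X ω - Y ω with hZdef
  have hXm : AEMeasurable X ℙ := hid.aemeasurable_fst
  have hYm : AEMeasurable Y ℙ := hid.aemeasurable_snd
  have hZm : AEStronglyMeasurable Z ℙ := (hXm.sub hYm).aestronglyMeasurable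
  have hX4mem : MemLp X 4 ℙ := aux_mem4 hXm.aestronglyMeasurable h4
  have hidY4 : IdentDistrib (fun ω => X ω ^ 4) (fun ω => Y ω ^ 4) ℙ ℙ :=
    hid.comp (measurable_id.pow_const 4)
  have hY4int : Integrable (fun ω => Y ω ^ 4) ℙ := hidY4.integrable_iff.1 h4
  have hY4mem : MemLp Y 4 ℙ := aux_mem4 hYm.aestronglyMeasurable hY4int
  have hZ4mem : MemLp Z 4 ℙ := hX4mem.sub hY4mem
  have hZ3mem : MemLp Z 3 ℙ := hZ4mem.mono_exponent (by norm_num)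
  have hZ2mem : MemLp Z 2 ℙ := hZ4mem.mono_exponent (by norm_num)
  have hZ1mem : MemLp Z 1 ℙ := hZ4mem.mono_exponent (by norm_num)
  have c4 : (4 : ℝ≥0∞) = ((4 : ℕ) : ℝ≥0∞) := by norm_num
  have c3 : (3 : ℝ≥0∞) = ((3 : ℕ) : ℝ≥0∞) := by norm_num
  have c2 : (2 : ℝ≥0∞) = ((2 : ℕ) : ℝ≥0∞) := by norm_num
  have c1 : (1 : ℝ≥0∞) = ((1 : ℕ) : ℝ≥0∞) := by norm_num
  have hZ4int : Integrable (fun ω => Z ω ^ 4) ℙ := by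
    have := aux_int_pow 4 (by norm_num) (c4 ▸ hZ4mem)
    refine this.congr (Filter.Eventually.of_forall fun ω => ?_)
    show |Z ω| ^ 4 = Z ω ^ 4
    rw [← abs_pow, abs_of_nonneg (by positivity)]
  have hZ3int : Integrable (fun ω => |Z ω| ^ 3) ℙ := aux_int_pow 3 (by norm_num) (c3 ▸ hZ3mem)
  have hZ2int : Integrable (fun ω => Z ω ^ 2) ℙ := by
    have := aux_int_pow 2 (by norm_num) (c2 ▸ hZ2mem)
    refine this.congr (Filter.Eventually.of_forall fun ω => ?_)
    show |Z ω| ^ 2 = Z ω ^ 2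
    rw [← abs_pow, abs_of_nonneg (by positivity)]
  have hZ1int : Integrable (fun ω => |Z ω|) ℙ := by
    have := aux_int_pow 1 (by norm_num) (c1 ▸ hZ1mem)
    refine this.congr (Filter.Eventually.of_forall fun ω => ?_)
    show |Z ω| ^ 1 = |Z ω|
    rw [pow_one]
  set s : ℝ := T ^ (1 / 2 : ℝ) with hsdef
  have hs : 0 < s := Real.rpow_pos_of_pos hT _
  have hs2 : s ^ 2 = T := by
    rw [hsdef, ← Real.rpow_natCast (T ^ (1 / 2 : ℝ)) 2, ← Real.rpow_mul hT.le]
    norm_num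
  have hs3 : s ^ 3 = T ^ (3 / 2 : ℝ) := by
    rw [hsdef, ← Real.rpow_natCast (T ^ (1 / 2 : ℝ)) 3, ← Real.rpow_mul hT.le]
    norm_num
  set N : ℝ := 2 * c * s with hNdef
  have hN : 0 < N := by positivity
  set I1 : ℝ := ∫ ω, |Z ω| with hI1
  set I3 : ℝ := ∫ ω, |Z ω| ^ 3 with hI3
  set I4 : ℝ := ∫ ω, Z ω ^ 4 with hI4
  have hI1nn : 0 ≤ I1 := integral_nonneg fun ω => abs_nonneg _
  have hI3nn : 0 ≤ I3 := integral_nonneg fun ω => by positivity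
  have hI4nn : 0 ≤ I4 := integral_nonneg fun ω => by positivity
  -- Step 1 : ∫ Z² ≤ N·I1 + I3/N
  have key1 : (∫ ω, Z ω ^ 2) ≤ N * I1 + I3 / N := by
    have hpt : ∀ ω, Z ω ^ 2 ≤ N * |Z ω| + |Z ω| ^ 3 / N := by
      intro ω
      have htn : 0 ≤ |Z ω| := abs_nonneg _
      have hz2 : Z ω ^ 2 = |Z ω| ^ 2 := (sq_abs _).symm
      have hdiv : |Z ω| ^ 2 - N * |Z ω| ≤ |Z ω| ^ 3 / N := by
        rw [le_div_iff₀ hN]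
        nlinarith [mul_nonneg htn (sq_nonneg (|Z ω| - N)), mul_nonneg hN.le (sq_nonneg (|Z ω|))]
      rw [hz2]
      linarith [hdiv]
    have hint : Integrable (fun ω => N * |Z ω| + |Z ω| ^ 3 / N) ℙ :=
      (hZ1int.const_mul N).add (hZ3int.div_const N)
    calc (∫ ω, Z ω ^ 2) ≤ ∫ ω, (N * |Z ω| + |Z ω| ^ 3 / N) :=
          integral_mono hZ2int hint hpt
      _ = N * I1 + I3 / N := by
          rw [integral_add (hZ1int.const_mul N) (hZ3int.div_const N),
            integral_const_mul, integral_div]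
  -- Step 2 : I3 ≤ I4 ^ (3/4)
  have key2 : I3 ≤ I4 ^ (3 / 4 : ℝ) := by
    have hle : eLpNorm Z 3 ℙ ≤ eLpNorm Z 4 ℙ :=
      eLpNorm_le_eLpNorm_of_exponent_le (by norm_num) hZm
    rw [hZ3mem.eLpNorm_eq_integral_rpow_norm (by norm_num) (by norm_num),
      hZ4mem.eLpNorm_eq_integral_rpow_norm (by norm_num) (by norm_num)] at hle
    have hJ3 : (∫ ω, ‖Z ω‖ ^ (3 : ℝ≥0∞).toReal) = I3 := by
      refine integral_congr_ae (Filter.Eventually.of_forall fun ω => ?_)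
      show ‖Z ω‖ ^ (3 : ℝ≥0∞).toReal = |Z ω| ^ 3
      rw [show ((3 : ℝ≥0∞)).toReal = ((3 : ℕ) : ℝ) by norm_num, Real.rpow_natCast,
        Real.norm_eq_abs]
    have hJ4 : (∫ ω, ‖Z ω‖ ^ (4 : ℝ≥0∞).toReal) = I4 := by
      refine integral_congr_ae (Filter.Eventually.of_forall fun ω => ?_)
      show ‖Z ω‖ ^ (4 : ℝ≥0∞).toReal = Z ω ^ 4
      rw [show ((4 : ℝ≥0∞)).toReal = ((4 : ℕ) : ℝ) by norm_num, Real.rpow_natCast,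
        Real.norm_eq_abs, ← abs_pow, abs_of_nonneg (by positivity)]
    rw [hJ3, hJ4] at hle
    have hr : I3 ^ ((3 : ℝ≥0∞).toReal)⁻¹ ≤ I4 ^ ((4 : ℝ≥0∞).toReal)⁻¹ :=
      (ENNReal.ofReal_le_ofReal_iff (by positivity)).1 hle
    have h3 : ((3 : ℝ≥0∞)).toReal = (3 : ℝ) := by norm_num
    have h4' : ((4 : ℝ≥0∞)).toReal = (4 : ℝ) := by norm_num
    rw [h3, h4'] at hr
    have hthis := Real.rpow_le_rpow (by positivity) hr (by norm_num : (0:ℝ) ≤ 3)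
    rw [← Real.rpow_mul hI3nn, ← Real.rpow_mul hI4nn] at hthis
    norm_num at hthis
    exact hthis
  -- Step 3 : I4 ≤ 16·b·T²
  have key3 : I4 ≤ 16 * b * T ^ 2 := by
    have hEY4 : (∫ ω, X ω ^ 4) = ∫ ω, Y ω ^ 4 := hidY4.integral_eq
    have hpt : ∀ ω, Z ω ^ 4 ≤ 8 * X ω ^ 4 + 8 * Y ω ^ 4 := by
      intro ω
      simp only [hZdef]
      nlinarith [sq_nonneg (X ω + Y ω), sq_nonneg (X ω - Y ω), sq_nonneg (X ω ^ 2 - Y ω ^ 2),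
        sq_nonneg (X ω ^ 2 + Y ω ^ 2), sq_nonneg (X ω * Y ω)]
    calc I4 ≤ ∫ ω, (8 * X ω ^ 4 + 8 * Y ω ^ 4) :=
          integral_mono hZ4int ((h4.const_mul 8).add (hY4int.const_mul 8)) hpt
      _ = 8 * (∫ ω, X ω ^ 4) + 8 * ∫ ω, Y ω ^ 4 := by
          rw [integral_add (h4.const_mul 8) (hY4int.const_mul 8),
            integral_const_mul, integral_const_mul]
      _ = 16 * ∫ ω, X ω ^ 4 := by rw [← hEY4]; ring
      _ ≤ 16 * (b * T ^ 2) := by linarith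
      _ = 16 * b * T ^ 2 := by ring
  set β : ℝ := b ^ (3 / 4 : ℝ) with hβdef
  have hβ : 0 < β := Real.rpow_pos_of_pos hb _
  have h16 : (16 : ℝ) ^ (3 / 4 : ℝ) = 8 := by
    rw [show (16 : ℝ) = 2 ^ ((4 : ℕ) : ℝ) by rw [Real.rpow_natCast]; norm_num,
      ← Real.rpow_mul (by norm_num : (0:ℝ) ≤ 2),
      show (((4 : ℕ) : ℝ) * (3 / 4)) = ((3 : ℕ) : ℝ) by norm_num, Real.rpow_natCast]
    norm_num
  have hpow : (16 * b * T ^ 2) ^ (3 / 4 : ℝ) = 8 * β * s ^ 3 := by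
    rw [Real.mul_rpow (by positivity) (by positivity),
      Real.mul_rpow (by norm_num) hb.le, h16, hs3,
      ← Real.rpow_natCast T 2, ← Real.rpow_mul hT.le]
    norm_num [hβdef]
  have main : a * s ^ 2 ≤ N * I1 + 8 * β * s ^ 3 / N := by
    have h34 : I4 ^ (3 / 4 : ℝ) ≤ (16 * b * T ^ 2) ^ (3 / 4 : ℝ) :=
      Real.rpow_le_rpow hI4nn key3 (by norm_num)
    rw [hs2]
    calc a * T ≤ ∫ ω, Z ω ^ 2 := h2
      _ ≤ N * I1 + I3 / N := key1
      _ ≤ N * I1 + I4 ^ (3 / 4 : ℝ) / N := by gcongr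
      _ ≤ N * I1 + (16 * b * T ^ 2) ^ (3 / 4 : ℝ) / N := by gcongr
      _ = N * I1 + 8 * β * s ^ 3 / N := by rw [hpow]
  have h25 : (4 : ℝ) ≤ 2 ^ (5 / 2 : ℝ) := by
    have h1 : (2 : ℝ) ^ ((2 : ℕ) : ℝ) ≤ 2 ^ (5 / 2 : ℝ) :=
      Real.rpow_le_rpow_of_exponent_le (by norm_num) (by norm_num)
    rw [Real.rpow_natCast] at h1
    linarith
  have hNe : 8 * β * s ^ 3 / N = 4 * β * s ^ 2 / c := by
    rw [hNdef]; field_simp; ring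
  rw [hNe] at main
  have step : (a - 4 * β / c) * s ≤ 2 * c * I1 := by
    have h' : s * ((a - 4 * β / c) * s) ≤ s * (2 * c * I1) := by
      have e1 : s * ((a - 4 * β / c) * s) = a * s ^ 2 - 4 * β * s ^ 2 / c := by ring
      have e2 : s * (2 * c * I1) = N * I1 := by rw [hNdef]; ring
      rw [e1, e2]; linarith
    exact le_of_mul_le_mul_left h' hs
  have hbc : 0 ≤ β / c := by positivity
  have hx : 0 ≤ (2 ^ (5 / 2 : ℝ) - 4) * (β / c) * s :=
    mul_nonneg (mul_nonneg (by linarith) hbc) hs.le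
  have g2 : (a - 2 ^ (5 / 2 : ℝ) * β / c) * s ≤ 2 * c * I1 := by
    have e : (a - 2 ^ (5 / 2 : ℝ) * β / c) * s
        = (a - 4 * β / c) * s - (2 ^ (5 / 2 : ℝ) - 4) * (β / c) * s := by ring
    linarith [e]
  calc (1 / (2 * c)) * (a - 2 ^ (5 / 2 : ℝ) * β / c) * s
      = (1 / (2 * c)) * ((a - 2 ^ (5 / 2 : ℝ) * β / c) * s) := by ring
    _ ≤ (1 / (2 * c)) * (2 * c * I1) := by
        apply mul_le_mul_of_nonneg_left g2 (by positivity)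
    _ = I1 := by
        rw [← mul_assoc, one_div, inv_mul_cancel₀ (by positivity : (2 * c) ≠ 0), one_mul]
end

section
/- Let x : ℕ → [0,∞] be a sequence of extended nonnegative reals and let n ∈ ℕ. Then (Σ_{l=0}^∞ x_l)^n = Σ_k (n!/Π_l k_l!)·Π_l x_l^{k_l}, where the (countable) sum on the right runs over all finitely supported functions k : ℕ → ℕ with Σ_{l=0}^∞ k_l = n. -/
open scoped ENNReal
open Finset

-- multinomial is unchanged by enlarging the index set past the support
lemma multinomial_subset_eq (k : ℕ →₀ ℕ) (s : Finset ℕ) (h : k.support ⊆ s) :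
    Nat.multinomial s k = Nat.multinomial k.support k := by
  unfold Nat.multinomial
  rw [← Finset.sum_subset h (fun i _ hi => Finsupp.notMem_support_iff.1 hi),
    ← Finset.prod_subset h (fun i _ hi => by
      rw [Finsupp.notMem_support_iff.1 hi]; rfl)]

lemma prod_subset_eq (x : ℕ → ℝ≥0∞) (k : ℕ →₀ ℕ) (s : Finset ℕ) (h : k.support ⊆ s) :
    ∏ i ∈ s, x i ^ k i = k.prod fun l m => x l ^ m := by
  rw [Finsupp.prod]
  exact (Finset.prod_subset h (fun i _ hi => by
    rw [Finsupp.notMem_support_iff.1 hi, pow_zero])).symm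

/-- Infinite multinomial identity in `[0,∞]`: for `x : ℕ → [0,∞]` and `n ∈ ℕ`,
`(Σ_l x_l)^n = Σ_k (n!/Π_l k_l!)·Π_l x_l^{k_l}`, the sum running over all finitely
supported `k : ℕ → ℕ` with `Σ_l k_l = n`. -/
theorem stmt_12 (x : ℕ → ℝ≥0∞) (n : ℕ) :
    (∑' l, x l) ^ n
      = ∑' k : {k : ℕ →₀ ℕ // k.sum (fun _ m => m) = n},
          (Nat.multinomial (k : ℕ →₀ ℕ).support (k : ℕ →₀ ℕ) : ℝ≥0∞) *
            (k : ℕ →₀ ℕ).prod fun l m => x l ^ m := by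
  classical
  set T := {k : ℕ →₀ ℕ // k.sum (fun _ m => m) = n}
  set f : T → ℝ≥0∞ := fun k =>
    (Nat.multinomial (k : ℕ →₀ ℕ).support (k : ℕ →₀ ℕ) : ℝ≥0∞) *
      (k : ℕ →₀ ℕ).prod fun l m => x l ^ m with hf
  -- the embedding from piAntidiag s n to T
  have hmem : ∀ (s : Finset ℕ) (k : ℕ → ℕ) (hk : k ∈ piAntidiag s n),
      (Finsupp.onFinset s k (fun i hi => (Finset.mem_piAntidiag.1 hk).2 i hi)).sum (fun _ m => m) = n := by
    intro s k hk
    obtain ⟨h1, h2⟩ := Finset.mem_piAntidiag.1 hk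
    rw [Finsupp.sum, Finset.sum_subset (Finsupp.support_onFinset_subset)
      (fun i _ hi => by simpa using Finsupp.notMem_support_iff.1 hi)]
    simpa using h1
  -- key identity for finite sums
  have key : ∀ s : Finset ℕ, (∑ l ∈ s, x l) ^ n =
      ∑ t ∈ (piAntidiag s n).attach.image
        (fun k => (⟨Finsupp.onFinset s k.1 (fun i hi => (Finset.mem_piAntidiag.1 k.2).2 i hi),
          hmem s k.1 k.2⟩ : T)), f t := by
    intro s
    rw [Finset.sum_pow_eq_sum_piAntidiag s x n]
    rw [Finset.sum_image (by
      intro a _ b _ hab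
      apply Subtype.ext
      have := congrArg (fun t : T => ((t : ℕ →₀ ℕ) : ℕ → ℕ)) hab
      simpa [Finsupp.coe_onFinset] using this)]
    rw [← Finset.sum_attach (piAntidiag s n) (fun k => (Nat.multinomial s k : ℝ≥0∞) * ∏ i ∈ s, x i ^ k i)]
    apply Finset.sum_congr rfl
    intro k _
    have hsupp : (Finsupp.onFinset s k.1 (fun i hi => (Finset.mem_piAntidiag.1 k.2).2 i hi)).support ⊆ s :=
      Finsupp.support_onFinset_subset
    simp only [hf]
    rw [← prod_subset_eq x _ s hsupp, ← multinomial_subset_eq _ s hsupp]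
    simp [Finsupp.onFinset_apply]
  -- ≤ direction: LHS ≤ RHS
  apply le_antisymm
  · have h1 : (∑' l, x l) ^ n = ⨆ s : Finset ℕ, (∑ l ∈ s, x l) ^ n := by
      rw [ENNReal.tsum_eq_iSup_sum]
      exact Monotone.map_ciSup_of_continuousAt (ENNReal.continuous_pow n).continuousAt
        (fun a b h => pow_le_pow_left' h n)
    rw [h1]
    apply iSup_le
    intro s
    rw [key s]
    exact ENNReal.sum_le_tsum _
  · rw [ENNReal.tsum_eq_iSup_sum]
    apply iSup_le
    intro T₀
    set s : Finset ℕ := T₀.sup (fun t => (t : ℕ →₀ ℕ).support) with hs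
    have hsub : T₀ ⊆ (piAntidiag s n).attach.image
        (fun k => (⟨Finsupp.onFinset s k.1 (fun i hi => (Finset.mem_piAntidiag.1 k.2).2 i hi),
          hmem s k.1 k.2⟩ : T)) := by
      intro t ht
      have hts : (t : ℕ →₀ ℕ).support ⊆ s := Finset.le_sup (f := fun t : T => (t : ℕ →₀ ℕ).support) ht
      have htp : ((t : ℕ →₀ ℕ) : ℕ → ℕ) ∈ piAntidiag s n := by
        rw [Finset.mem_piAntidiag]
        constructor
        · rw [← Finset.sum_subset hts (fun i _ hi => Finsupp.notMem_support_iff.1 hi)]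
          exact t.2
        · intro i hi
          exact hts (Finsupp.mem_support_iff.2 hi)
      rw [Finset.mem_image]
      refine ⟨⟨_, htp⟩, Finset.mem_attach _ _, ?_⟩
      apply Subtype.ext
      apply Finsupp.ext
      intro i
      simp [Finsupp.coe_onFinset]
    calc ∑ t ∈ T₀, f t ≤ _ := Finset.sum_le_sum_of_subset hsub
      _ = (∑ l ∈ s, x l) ^ n := (key s).symm
      _ ≤ (∑' l, x l) ^ n := pow_le_pow_left' (ENNReal.sum_le_tsum s) n
end
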